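/- For every odd integer n ≥ 1, (2n)! / (2^n · (n!)² · (n+1)!) = Σ_{z=0}^{(n−1)/2} (4z − n + 2) / (2^{2z+1} · (z+1) · (z!)² · (n−2z)!), as an identity in ℚ (note that the integer factor 4z − n + 2 may be negative). -/

import Mathlib

open Finset

lemma key (m : ℕ) : ∀ c : ℕ,
    (∑ z ∈ range (m+1), Nat.choose m (2*z) * Nat.choose (2*z) (z+c) * 4^(m-z)
        = 2^m * Nat.choose (2*m) (m+2*c)) ∧
    (∑ z ∈ range (m+1), Nat.choose m (2*z+1) * Nat.choose (2*z+1) (z+c+1) * 4^(m-z)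
        = 2^(m+1) * Nat.choose (2*m) (m+2*c+1)) := by
  induction m with
  | zero =>
    intro c
    constructor
    · cases c with
      | zero => simp
      | succ c => simp [Nat.choose_eq_zero_of_lt]
    · simp
  | succ m ih =>
    intro c
    have hEv3 : (∑ i ∈ range (m+1),
          Nat.choose m (2*(i+1)) * Nat.choose (2*(i+1)) ((i+1)+c) * 4^(m-i))
          + Nat.choose 0 c * 4^(m+1)
        = 4 * (2^m * Nat.choose (2*m) (m+2*c)) := by
      have e := Finset.sum_range_succ'
        (fun z => Nat.choose m (2*z) * Nat.choose (2*z) (z+c) * 4^(m+1-z)) (m+1)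
      try simp only [] at e
      have e2 : ∀ i ∈ range (m+1),
          Nat.choose m (2*(i+1)) * Nat.choose (2*(i+1)) ((i+1)+c) * 4^(m+1-(i+1))
          = Nat.choose m (2*(i+1)) * Nat.choose (2*(i+1)) ((i+1)+c) * 4^(m-i) := by
        intro i hi
        rw [show m+1-(i+1) = m-i by omega]
      rw [Finset.sum_congr rfl e2] at e
      have e3 : (∑ z ∈ range (m+1+1),
          Nat.choose m (2*z) * Nat.choose (2*z) (z+c) * 4^(m+1-z))
          = 4 * (2^m * Nat.choose (2*m) (m+2*c)) := by
        rw [Finset.sum_range_succ]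
        rw [Nat.choose_eq_zero_of_lt (show m < 2*(m+1) by omega)]
        simp only [zero_mul, add_zero]
        rw [show (∑ z ∈ range (m+1), Nat.choose m (2*z) * Nat.choose (2*z) (z+c) * 4^(m+1-z))
            = ∑ z ∈ range (m+1), 4 * (Nat.choose m (2*z) * Nat.choose (2*z) (z+c) * 4^(m-z)) from
          Finset.sum_congr rfl (fun z hzz => by
            rw [Finset.mem_range] at hzz
            rw [show m+1-z = (m-z)+1 by omega, pow_succ]; ring)]
        rw [← Finset.mul_sum, (ih c).1]
      rw [e3] at e
      simp only [Nat.mul_zero, Nat.zero_add, Nat.sub_zero, Nat.choose_zero_right, one_mul] at e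
      exact e.symm
    have hterm : ∀ i ∈ range (m+1),
        Nat.choose (m+1) (2*(i+1)) * Nat.choose (2*(i+1)) ((i+1)+c) * 4^(m+1-(i+1))
        = Nat.choose m (2*i+1) * Nat.choose (2*i+1) (i+c) * 4^(m-i)
          + Nat.choose m (2*i+1) * Nat.choose (2*i+1) (i+c+1) * 4^(m-i)
          + Nat.choose m (2*(i+1)) * Nat.choose (2*(i+1)) ((i+1)+c) * 4^(m-i) := by
      intro i hi
      have e1 : 2*(i+1) = (2*i+1)+1 := by ring
      have e2 : (i+1)+c = (i+c)+1 := by ring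
      have e3 : m+1-(i+1) = m-i := by omega
      rw [e3, e1, e2, Nat.choose_succ_succ' m (2*i+1), Nat.choose_succ_succ' (2*i+1) (i+c)]
      ring
    constructor
    · -- even case
      rw [Finset.sum_range_succ']
      rw [Finset.sum_congr rfl hterm]
      rw [Finset.sum_add_distrib, Finset.sum_add_distrib]
      simp only [Nat.mul_zero, Nat.zero_add, Nat.sub_zero, Nat.choose_zero_right, one_mul]
      rw [add_assoc, hEv3, (ih c).2]
      rcases c with _ | c'
      · -- c = 0
        simp only [Nat.mul_zero, Nat.add_zero]
        have hS1 : (∑ i ∈ range (m+1),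
            Nat.choose m (2*i+1) * Nat.choose (2*i+1) i * 4^(m-i))
            = 2^(m+1) * Nat.choose (2*m) (m+1) := by
          rw [show (∑ i ∈ range (m+1), Nat.choose m (2*i+1) * Nat.choose (2*i+1) i * 4^(m-i))
              = ∑ i ∈ range (m+1), Nat.choose m (2*i+1) * Nat.choose (2*i+1) (i+1) * 4^(m-i) from
            Finset.sum_congr rfl (fun i _ => by
              have hsymm := Nat.choose_symm (show i ≤ 2*i+1 by omega)
              rw [show 2*i+1-i = i+1 by omega] at hsymm
              rw [← hsymm])]
          have := (ih 0).2
          simpa using this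
        rw [hS1]
        have a1 : Nat.choose (2*m+2) (m+1) = Nat.choose (2*m+1) m + Nat.choose (2*m+1) (m+1) :=
          Nat.choose_succ_succ' (2*m+1) m
        have a2 : Nat.choose (2*m+1) (m+1) = Nat.choose (2*m+1) m := by
          have := Nat.choose_symm (show m ≤ 2*m+1 by omega)
          rw [show 2*m+1-m = m+1 by omega] at this
          exact this
        have a3 : Nat.choose (2*m+1) (m+1) = Nat.choose (2*m) m + Nat.choose (2*m) (m+1) :=
          Nat.choose_succ_succ' (2*m) m
        rw [show 2*(m+1) = 2*m+2 by ring, a1, ← a2, a3]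
        have hp : (2:ℕ)^(m+1) = 2*2^m := by rw [pow_succ]; ring
        rw [hp]; ring
      · -- c = c'+1
        have hS1 : (∑ i ∈ range (m+1),
            Nat.choose m (2*i+1) * Nat.choose (2*i+1) (i+(c'+1)) * 4^(m-i))
            = 2^(m+1) * Nat.choose (2*m) (m+2*c'+1) := by
          rw [show (∑ i ∈ range (m+1),
              Nat.choose m (2*i+1) * Nat.choose (2*i+1) (i+(c'+1)) * 4^(m-i))
              = ∑ i ∈ range (m+1), Nat.choose m (2*i+1) * Nat.choose (2*i+1) (i+c'+1) * 4^(m-i) from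
            Finset.sum_congr rfl (fun i _ => by rw [← add_assoc])]
          exact (ih c').2
        rw [hS1]
        have b1 : Nat.choose (2*m+2) (m+2*c'+3)
            = Nat.choose (2*m) (m+2*c'+1) + 2 * Nat.choose (2*m) (m+2*c'+2)
              + Nat.choose (2*m) (m+2*c'+3) := by
          have p1 : Nat.choose (2*m+2) (m+2*c'+3)
              = Nat.choose (2*m+1) (m+2*c'+2) + Nat.choose (2*m+1) (m+2*c'+3) :=
            Nat.choose_succ_succ' (2*m+1) (m+2*c'+2)
          have p2 : Nat.choose (2*m+1) (m+2*c'+2)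
              = Nat.choose (2*m) (m+2*c'+1) + Nat.choose (2*m) (m+2*c'+2) :=
            Nat.choose_succ_succ' (2*m) (m+2*c'+1)
          have p3 : Nat.choose (2*m+1) (m+2*c'+3)
              = Nat.choose (2*m) (m+2*c'+2) + Nat.choose (2*m) (m+2*c'+3) :=
            Nat.choose_succ_succ' (2*m) (m+2*c'+2)
          omega
        rw [show 2*(m+1) = 2*m+2 by ring, show m+1+2*(c'+1) = m+2*c'+3 by ring,
          show m+2*(c'+1)+1 = m+2*c'+3 by ring, show m+2*(c'+1) = m+2*c'+2 by ring, b1]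
        have hp : (2:ℕ)^(m+1) = 2*2^m := by rw [pow_succ]; ring
        rw [hp]; ring
    · -- odd case
      rw [Finset.sum_range_succ]
      rw [Nat.choose_eq_zero_of_lt (show m+1 < 2*(m+1)+1 by omega)]
      simp only [zero_mul, add_zero]
      rw [show (∑ z ∈ range (m+1),
            Nat.choose (m+1) (2*z+1) * Nat.choose (2*z+1) (z+c+1) * 4^(m+1-z))
          = ∑ z ∈ range (m+1),
            (4 * (Nat.choose m (2*z) * Nat.choose (2*z) (z+c) * 4^(m-z))
             + 4 * (Nat.choose m (2*z) * Nat.choose (2*z) (z+c+1) * 4^(m-z))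
             + 4 * (Nat.choose m (2*z+1) * Nat.choose (2*z+1) (z+c+1) * 4^(m-z))) from
        Finset.sum_congr rfl (fun z hzz => by
          rw [Finset.mem_range] at hzz
          rw [show m+1-z = (m-z)+1 by omega, pow_succ,
            Nat.choose_succ_succ' m (2*z), Nat.choose_succ_succ' (2*z) (z+c)]
          ring)]
      rw [Finset.sum_add_distrib, Finset.sum_add_distrib,
        ← Finset.mul_sum, ← Finset.mul_sum, ← Finset.mul_sum, (ih c).1, (ih c).2]
      rw [show (∑ z ∈ range (m+1), Nat.choose m (2*z) * Nat.choose (2*z) (z+c+1) * 4^(m-z))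
          = 2^m * Nat.choose (2*m) (m+2*(c+1)) from
        (by
          rw [show (∑ z ∈ range (m+1), Nat.choose m (2*z) * Nat.choose (2*z) (z+c+1) * 4^(m-z))
              = ∑ z ∈ range (m+1), Nat.choose m (2*z) * Nat.choose (2*z) (z+(c+1)) * 4^(m-z) from
            Finset.sum_congr rfl (fun z _ => by rw [add_assoc])]
          exact (ih (c+1)).1)]
      have b1 : Nat.choose (2*m+2) (m+2*c+2)
          = Nat.choose (2*m) (m+2*c) + 2 * Nat.choose (2*m) (m+2*c+1)
            + Nat.choose (2*m) (m+2*c+2) := by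
        have p1 : Nat.choose (2*m+2) (m+2*c+2)
            = Nat.choose (2*m+1) (m+2*c+1) + Nat.choose (2*m+1) (m+2*c+2) :=
          Nat.choose_succ_succ' (2*m+1) (m+2*c+1)
        have p2 : Nat.choose (2*m+1) (m+2*c+1)
            = Nat.choose (2*m) (m+2*c) + Nat.choose (2*m) (m+2*c+1) :=
          Nat.choose_succ_succ' (2*m) (m+2*c)
        have p3 : Nat.choose (2*m+1) (m+2*c+2)
            = Nat.choose (2*m) (m+2*c+1) + Nat.choose (2*m) (m+2*c+2) :=
          Nat.choose_succ_succ' (2*m) (m+2*c+1)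
        omega
      rw [show 2*(m+1) = 2*m+2 by ring, show m+1+2*c+1 = m+2*c+2 by ring,
        show m+2*(c+1) = m+2*c+2 by ring, b1]
      have hp : (2:ℕ)^(m+1) = 2*2^m := by rw [pow_succ]; ring
      have hp2 : (2:ℕ)^(m+1+1) = 4*2^m := by rw [pow_succ, pow_succ]; ring
      rw [hp2, hp]; ring

open Nat in
theorem stmt_8 (n : ℕ) (hn : 1 ≤ n) (hodd : Odd n) :
    ((2 * n) ! : ℚ) / ((2 : ℚ) ^ n * ((n ! : ℚ)) ^ 2 * ((n + 1) ! : ℚ)) =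
      ∑ z ∈ Finset.range ((n - 1) / 2 + 1),
        (4 * (z : ℚ) - (n : ℚ) + 2) /
          ((2 : ℚ) ^ (2 * z + 1) * ((z : ℚ) + 1) * ((z ! : ℚ)) ^ 2 * ((n - 2 * z) ! : ℚ)) := by
  obtain ⟨m, hm⟩ := hodd
  subst hm
  rw [show (2*m+1-1)/2 + 1 = m+1 by omega]
  -- ℕ-level sum evaluations via `key`
  have kA : (∑ z ∈ range (m+1),
      Nat.choose (2*m+1) (2*z) * Nat.choose (2*z) z * 4^(2*m+1-z))
      = 2^(2*m+1) * Nat.choose (2*(2*m+1)) (2*m+1) := by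
    have hext : (∑ z ∈ range (m+1),
        Nat.choose (2*m+1) (2*z) * Nat.choose (2*z) z * 4^(2*m+1-z))
        = ∑ z ∈ range (2*m+1+1),
        Nat.choose (2*m+1) (2*z) * Nat.choose (2*z) z * 4^(2*m+1-z) := by
      apply Finset.sum_subset (Finset.range_subset_range.mpr (by omega))
      intro x hx hnx
      rw [Finset.mem_range] at hx hnx
      rw [Nat.choose_eq_zero_of_lt (show 2*m+1 < 2*x by omega)]
      ring
    rw [hext]
    have h := (key (2*m+1) 0).1
    simpa using h
  have kB : (∑ z ∈ range (m+1),
      Nat.choose (2*m) (2*z) * Nat.choose (2*z) z * 4^(2*m-z))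
      = 2^(2*m) * Nat.choose (2*(2*m)) (2*m) := by
    have hext : (∑ z ∈ range (m+1),
        Nat.choose (2*m) (2*z) * Nat.choose (2*z) z * 4^(2*m-z))
        = ∑ z ∈ range (2*m+1),
        Nat.choose (2*m) (2*z) * Nat.choose (2*z) z * 4^(2*m-z) := by
      apply Finset.sum_subset (Finset.range_subset_range.mpr (by omega))
      intro x hx hnx
      rw [Finset.mem_range] at hx hnx
      rw [Nat.choose_eq_zero_of_lt (show 2*m < 2*x by omega)]
      ring
    rw [hext]
    have h := (key (2*m) 0).1
    simpa using h
  have kB' : (∑ z ∈ range (m+1),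
      Nat.choose (2*m) (2*z) * Nat.choose (2*z) (z+1) * 4^(2*m-z))
      = 2^(2*m) * Nat.choose (2*(2*m)) (2*m+2) := by
    have hext : (∑ z ∈ range (m+1),
        Nat.choose (2*m) (2*z) * Nat.choose (2*z) (z+1) * 4^(2*m-z))
        = ∑ z ∈ range (2*m+1),
        Nat.choose (2*m) (2*z) * Nat.choose (2*z) (z+1) * 4^(2*m-z) := by
      apply Finset.sum_subset (Finset.range_subset_range.mpr (by omega))
      intro x hx hnx
      rw [Finset.mem_range] at hx hnx
      rw [Nat.choose_eq_zero_of_lt (show 2*m < 2*x by omega)]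
      ring
    rw [hext]
    have h := (key (2*m) 1).1
    simpa using h
  -- transform the sum
  have main : (∑ z ∈ Finset.range (m+1),
      (4 * (z : ℚ) - ((2*m+1 : ℕ) : ℚ) + 2) /
        ((2 : ℚ) ^ (2 * z + 1) * ((z : ℚ) + 1) * ((z ! : ℚ)) ^ 2 * (((2*m+1 - 2 * z) !) : ℚ)))
      = ((2^(2*m+1) * Nat.choose (2*(2*m+1)) (2*m+1) : ℕ) : ℚ)
          / ((2:ℚ)^(2*m+1) * (2:ℚ)^(2*m+1) * ((2*m+1)! : ℚ))
        - ((2*m+1 : ℕ) : ℚ) *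
          ((((2^(2*m) * Nat.choose (2*(2*m)) (2*m) : ℕ) : ℚ)
              - ((2^(2*m) * Nat.choose (2*(2*m)) (2*m+2) : ℕ) : ℚ))
            / ((2:ℚ)^(2*m) * (2:ℚ)^(2*m+1) * ((2*m+1)! : ℚ))) := by
    rw [show (∑ z ∈ Finset.range (m+1),
        (4 * (z : ℚ) - ((2*m+1 : ℕ) : ℚ) + 2) /
          ((2 : ℚ) ^ (2 * z + 1) * ((z : ℚ) + 1) * ((z ! : ℚ)) ^ 2 * (((2*m+1 - 2 * z) !) : ℚ)))
        = ∑ z ∈ Finset.range (m+1),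
          (((Nat.choose (2*m+1) (2*z) * Nat.choose (2*z) z * 4^(2*m+1-z) : ℕ) : ℚ)
              / ((2:ℚ)^(2*m+1) * (2:ℚ)^(2*m+1) * ((2*m+1)! : ℚ))
            - ((2*m+1 : ℕ) : ℚ) *
              ((((Nat.choose (2*m) (2*z) * Nat.choose (2*z) z * 4^(2*m-z) : ℕ) : ℚ)
                  - ((Nat.choose (2*m) (2*z) * Nat.choose (2*z) (z+1) * 4^(2*m-z) : ℕ) : ℚ))
                / ((2:ℚ)^(2*m) * (2:ℚ)^(2*m+1) * ((2*m+1)! : ℚ)))) from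
      Finset.sum_congr rfl (fun z hz => by
        rw [Finset.mem_range] at hz
        obtain ⟨k, hk⟩ : ∃ k, m = z + k := ⟨m - z, by omega⟩
        subst hk
        rw [show 2*(z+k)+1-2*z = 2*k+1 by omega, show 2*(z+k)+1-z = z+2*k+1 by omega,
          show 2*(z+k)-z = z+2*k by omega]
        have c4' : ((Nat.choose (2*z) (z+1)) : ℚ) = ((Nat.choose (2*z) z : ℚ)) * z / ((z:ℚ)+1) := by
          have c4n : Nat.choose (2*z) (z+1) * (z+1) = Nat.choose (2*z) z * z := by
            have := Nat.choose_succ_right_eq (2*z) z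
            rwa [show 2*z-z = z by omega] at this
          rw [eq_div_iff (show ((z:ℚ)+1) ≠ 0 by positivity)]
          exact_mod_cast c4n
        have c1 : ((Nat.choose (2*(z+k)+1) (2*z)) : ℚ)
            = ((2*(z+k)+1)! : ℚ) / (((2*z)! : ℚ) * ((2*k+1)! : ℚ)) := by
          rw [Nat.cast_choose ℚ (show 2*z ≤ 2*(z+k)+1 by omega),
            show 2*(z+k)+1-2*z = 2*k+1 by omega]
        have c2 : ((Nat.choose (2*(z+k)) (2*z)) : ℚ)
            = ((2*(z+k))! : ℚ) / (((2*z)! : ℚ) * ((2*k)! : ℚ)) := by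
          rw [Nat.cast_choose ℚ (show 2*z ≤ 2*(z+k) by omega),
            show 2*(z+k)-2*z = 2*k by omega]
        have c3 : ((Nat.choose (2*z) z) : ℚ) = ((2*z)! : ℚ) / ((z ! : ℚ) * (z ! : ℚ)) := by
          rw [Nat.cast_choose ℚ (show z ≤ 2*z by omega), show 2*z-z = z by omega]
        have f1 : ((2*(z+k)+1)! : ℚ) = (2*((z:ℚ)+(k:ℚ))+1) * ((2*(z+k))! : ℚ) := by
          have := Nat.factorial_succ (2*(z+k))
          push_cast [this]
          ring
        have f2 : ((2*k+1)! : ℚ) = (2*(k:ℚ)+1) * ((2*k)! : ℚ) := by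
          have := Nat.factorial_succ (2*k)
          push_cast [this]
          ring
        have n2 : ((z ! : ℚ)) ≠ 0 := Nat.cast_ne_zero.mpr (Nat.factorial_ne_zero z)
        have n3 : (((2*z)! : ℚ)) ≠ 0 := Nat.cast_ne_zero.mpr (Nat.factorial_ne_zero _)
        have n4 : (((2*k)! : ℚ)) ≠ 0 := Nat.cast_ne_zero.mpr (Nat.factorial_ne_zero _)
        have n5 : (((2*(z+k))! : ℚ)) ≠ 0 := Nat.cast_ne_zero.mpr (Nat.factorial_ne_zero _)
        have n6 : (((2*(z+k)+1)! : ℚ)) ≠ 0 := Nat.cast_ne_zero.mpr (Nat.factorial_ne_zero _)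
        push_cast
        rw [c1, c2, c4', c3, f1, f2]
        rw [show (4:ℚ) = 2^2 by norm_num, ← pow_mul, ← pow_mul]
        have n1 : ((z:ℚ)+1) ≠ 0 := by positivity
        have n7 : (2*(k:ℚ)+1) ≠ 0 := by positivity
        have n8 : (2*((z:ℚ)+(k:ℚ))+1) ≠ 0 := by positivity
        field_simp
        ring)]
    rw [Finset.sum_sub_distrib, ← Finset.sum_div, ← Nat.cast_sum, kA]
    rw [← Finset.mul_sum, ← Finset.sum_div, Finset.sum_sub_distrib,
      ← Nat.cast_sum, ← Nat.cast_sum, kB, kB']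
  rw [main]
  -- final arithmetic
  have hdiff : (2*(m:ℚ)+2) * ((Nat.choose (2*(2*m)) (2*m) : ℚ) - (Nat.choose (2*(2*m)) (2*m+2) : ℚ))
      = (Nat.choose (2*(2*m+1)) (2*m+1) : ℚ) := by
    rw [show 2*(2*m) = 4*m by ring, show 2*(2*m+1) = 4*m+2 by ring]
    have p1 : Nat.choose (4*m+1) (2*m+1) = Nat.choose (4*m) (2*m) + Nat.choose (4*m) (2*m+1) :=
      Nat.choose_succ_succ' (4*m) (2*m)
    have p2 : Nat.choose (4*m+1) (2*m+2) = Nat.choose (4*m) (2*m+1) + Nat.choose (4*m) (2*m+2) :=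
      Nat.choose_succ_succ' (4*m) (2*m+1)
    have p3 : Nat.choose (4*m+1) (2*m+2) * (2*m+2) = Nat.choose (4*m+1) (2*m+1) * (2*m) := by
      have := Nat.choose_succ_right_eq (4*m+1) (2*m+1)
      rwa [show 4*m+1-(2*m+1) = 2*m by omega] at this
    have p4 : Nat.choose (4*m+2) (2*m+1) = Nat.choose (4*m+1) (2*m) + Nat.choose (4*m+1) (2*m+1) :=
      Nat.choose_succ_succ' (4*m+1) (2*m)
    have p5 : Nat.choose (4*m+1) (2*m) = Nat.choose (4*m+1) (2*m+1) := by
      have := Nat.choose_symm (show 2*m+1 ≤ 4*m+1 by omega)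
      rwa [show 4*m+1-(2*m+1) = 2*m by omega] at this
    have q1 : ((Nat.choose (4*m+1) (2*m+1)) : ℚ)
        = (Nat.choose (4*m) (2*m) : ℚ) + (Nat.choose (4*m) (2*m+1) : ℚ) := by exact_mod_cast p1
    have q2 : ((Nat.choose (4*m+1) (2*m+2)) : ℚ)
        = (Nat.choose (4*m) (2*m+1) : ℚ) + (Nat.choose (4*m) (2*m+2) : ℚ) := by exact_mod_cast p2
    have q3 : ((Nat.choose (4*m+1) (2*m+2)) : ℚ) * (2*(m:ℚ)+2)
        = (Nat.choose (4*m+1) (2*m+1) : ℚ) * (2*(m:ℚ)) := by exact_mod_cast p3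
    have q4 : ((Nat.choose (4*m+2) (2*m+1)) : ℚ)
        = (Nat.choose (4*m+1) (2*m) : ℚ) + (Nat.choose (4*m+1) (2*m+1) : ℚ) := by exact_mod_cast p4
    have q5 : ((Nat.choose (4*m+1) (2*m)) : ℚ) = (Nat.choose (4*m+1) (2*m+1) : ℚ) := by
      exact_mod_cast p5
    linear_combination (-(2*(m:ℚ)+2))*q1 + (2*(m:ℚ)+2)*q2 - q3 - q4 - q5
  have hY : ((Nat.choose (2*(2*m)) (2*m) : ℚ)) - ((Nat.choose (2*(2*m)) (2*m+2) : ℚ))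
      = (Nat.choose (2*(2*m+1)) (2*m+1) : ℚ) / (2*(m:ℚ)+2) := by
    rw [eq_div_iff (show (2*(m:ℚ)+2) ≠ 0 by positivity)]
    linear_combination hdiff
  have hL : (((2*(2*m+1)) !) : ℚ)
      = (Nat.choose (2*(2*m+1)) (2*m+1) : ℚ) * ((2*m+1)! : ℚ) * ((2*m+1)! : ℚ) := by
    have := Nat.choose_mul_factorial_mul_factorial (show 2*m+1 ≤ 2*(2*m+1) by omega)
    rw [show 2*(2*m+1) - (2*m+1) = 2*m+1 by omega] at this
    exact_mod_cast this.symm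
  have hfs : (((2*m+1+1) !) : ℚ) = ((2*m:ℚ)+2) * ((2*m+1)! : ℚ) := by
    have := Nat.factorial_succ (2*m+1)
    push_cast [this]
    ring
  have nF : (((2*m+1)! : ℚ)) ≠ 0 := Nat.cast_ne_zero.mpr (Nat.factorial_ne_zero _)
  push_cast
  rw [hL, hfs, ← mul_sub, hY]
  have n9 : (2*(m:ℚ)+2) ≠ 0 := by positivity
  field_simp
  ring
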